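/- Let k be a positive integer and N = k(k+1). Define sequences (a_m, b_m) by a_m + b_m√N = (2k+1 + 2√N)^m for m ≥ 1. Then for all m ≥ 1, b_m is even and (2k+1)·(b_m/2) ≥ a_m, i.e., u_m = b_m/2 and v_m = (2k+1)b_m/2 - a_m are nonnegative integers. -/
import Mathlib

/-- Canonical coordinates of `(2k+1 + 2√N)^m`. -/
def pellAB (k : ℕ) : ℕ → ℤ × ℤ
  | 0 => (1, 0)
  | n + 1 =>
    let p := pellAB k n
    ((2 * k + 1) * p.1 + 2 * (k * (k + 1)) * p.2, 2 * p.1 + (2 * k + 1) * p.2)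

lemma pellAB_spec (k : ℕ) (m : ℕ) :
    (((pellAB k m).1 : ℝ) + ((pellAB k m).2 : ℝ) * Real.sqrt (k * (k + 1) : ℝ))
      = ((2 * k + 1 : ℝ) + 2 * Real.sqrt (k * (k + 1) : ℝ)) ^ m := by
  induction m with
  | zero => simp [pellAB]
  | succ n ih =>
    have hs : Real.sqrt (k * (k + 1) : ℝ) * Real.sqrt (k * (k + 1) : ℝ)
        = (k * (k + 1) : ℝ) := Real.mul_self_sqrt (by positivity)
    rw [pow_succ, ← ih]
    simp only [pellAB]
    push_cast
    linear_combination (-2 * ((pellAB k n).2 : ℝ)) * hs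

lemma pellAB_props (k : ℕ) (hk : 0 < k) (m : ℕ) (hm : 1 ≤ m) :
    2 ∣ (pellAB k m).2 ∧ 0 ≤ (pellAB k m).1 ∧ 0 ≤ (pellAB k m).2 ∧
      2 * (pellAB k m).1 ≤ (2 * k + 1) * (pellAB k m).2 := by
  induction m, hm using Nat.le_induction with
  | base => simp [pellAB]; ring_nf; omega
  | succ n hn ih =>
    obtain ⟨hdvd, ha, hb, hab⟩ := ih
    set A := (pellAB k n).1
    set B := (pellAB k n).2
    have hN : (0 : ℤ) ≤ (k * (k + 1) : ℕ) := Int.natCast_nonneg _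
    refine ⟨?_, ?_, ?_, ?_⟩
    · show 2 ∣ 2 * A + (2 * k + 1) * B
      exact dvd_add ⟨A, rfl⟩ (Dvd.dvd.mul_left hdvd _)
    · show (0:ℤ) ≤ (2 * k + 1) * A + 2 * (k * (k + 1)) * B
      positivity
    · show (0:ℤ) ≤ 2 * A + (2 * k + 1) * B
      positivity
    · show 2 * ((2 * k + 1) * A + 2 * (k * (k + 1)) * B)
        ≤ (2 * k + 1) * (2 * A + (2 * k + 1) * B)
      nlinarith [sq_nonneg ((k:ℤ))]

lemma sqrt_irrat (k : ℕ) (hk : 0 < k) : Irrational (Real.sqrt (k * (k + 1) : ℕ)) := by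
  rw [irrational_sqrt_natCast_iff]
  rintro ⟨r, hr⟩
  rcases Nat.lt_or_ge r (k + 1) with h1 | h1
  · nlinarith
  · nlinarith

/-- If `a_m + b_m √N = (2k+1 + 2√N)^m` with `m ≥ 1` and `N = k(k+1)`, then `b_m`
is even and `u_m = b_m/2`, `v_m = (2k+1) b_m/2 - a_m` are nonnegative integers,
i.e. `0 ≤ b_m` and `2 a_m ≤ (2k+1) b_m`. -/
theorem stmt_6 (k : ℕ) (hk : 0 < k) (m : ℕ) (hm : 1 ≤ m) (a b : ℤ)
    (h : (a : ℝ) + (b : ℝ) * Real.sqrt (k * (k + 1) : ℝ)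
        = ((2 * k + 1 : ℝ) + 2 * Real.sqrt (k * (k + 1) : ℝ)) ^ m) :
    2 ∣ b ∧ 0 ≤ b ∧ 2 * a ≤ (2 * k + 1) * b := by
  have hspec := pellAB_spec k m
  set A := (pellAB k m).1
  set B := (pellAB k m).2
  have heq : (a : ℝ) + (b : ℝ) * Real.sqrt (k * (k + 1) : ℝ)
      = (A : ℝ) + (B : ℝ) * Real.sqrt (k * (k + 1) : ℝ) := h.trans hspec.symm
  have hirr : Irrational (Real.sqrt (k * (k + 1) : ℝ)) := by
    have := sqrt_irrat k hk
    rwa [show ((k * (k + 1) : ℕ) : ℝ) = (k * (k + 1) : ℝ) by push_cast; ring] at this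
  have hb : b = B := by
    by_contra hne
    have hbB : ((b : ℝ) - B) ≠ 0 := by
      simpa [sub_eq_zero] using (fun hx => hne (by exact_mod_cast hx : b = B))
    have hval : Real.sqrt (k * (k + 1) : ℝ) = ((A : ℝ) - a) / ((b : ℝ) - B) := by
      rw [eq_div_iff hbB]
      linear_combination heq
    exact hirr ⟨((A - a : ℤ) : ℚ) / ((b - B : ℤ) : ℚ), by rw [hval]; push_cast; ring⟩
  have ha : a = A := by
    have : (a : ℝ) = (A : ℝ) := by rw [hb] at heq; linarith [heq]
    exact_mod_cast this
  obtain ⟨h1, h2, h3, h4⟩ := pellAB_props k hk m hm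
  subst ha hb
  exact ⟨h1, h3, h4⟩
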